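/- Let n be a positive natural number and let R = ℤ[t,t⁻¹] be the ring of Laurent polynomials over ℤ. Let N_β be the R-submodule of (Fin (2n) → R) spanned by the elements (t⁻¹−1) • e_i + e_{i+1} for i ∈ Fin (2n), where i+1 is taken cyclically in Fin (2n). Then the quotient module (Fin (2n) → R) ⧸ N_β is isomorphic as an R-module to R ⧸ Ideal.span {1 − (1−t⁻¹)^{2n}}. -/

import Mathlib

open LaurentPolynomial

set_option synthInstance.maxHeartbeats 1000000
set_option maxHeartbeats 1000000

noncomputable section WheelAux

namespace WheelAux

open Fin.NatCast

abbrev Rr := LaurentPolynomial ℤ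

def u : Rr := 1 - T (-1)

variable (m : ℕ) [NeZero m]

def e (i : Fin m) : Fin m → Rr := Pi.single i 1

def φ : (Fin m → Rr) →ₗ[Rr] Rr :=
  ∑ i : Fin m, (u ^ (i : ℕ)) • LinearMap.proj i

omit [NeZero m] in
lemma φ_apply (v : Fin m → Rr) : φ m v = ∑ i : Fin m, u ^ (i : ℕ) * v i := by
  simp [φ, smul_eq_mul]

omit [NeZero m] in
lemma φ_e (i : Fin m) : φ m (e m i) = u ^ (i : ℕ) := by
  rw [φ_apply, Finset.sum_eq_single i]
  · simp [e]
  · intro j _ hj; simp [e, Pi.single_apply, hj]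
  · simp

def N : Submodule Rr (Fin m → Rr) :=
  Submodule.span Rr (Set.range fun i : Fin m =>
    (T (-1) - 1 : Rr) • (Pi.single i (1:Rr) : Fin m → Rr) + Pi.single (i+1) (1:Rr))

lemma gen_eq (i : Fin m) :
    (T (-1) - 1 : Rr) • (Pi.single i (1:Rr) : Fin m → Rr) + Pi.single (i+1) (1:Rr)
      = e m (i+1) - u • e m i := by
  have h : (T (-1) - 1 : Rr) = -u := (neg_sub 1 (T (-1))).symm
  rw [h]
  show _ = Pi.single (i+1) (1:Rr) - u • (Pi.single i (1:Rr) : Fin m → Rr)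
  module

lemma step_mem (i : Fin m) : e m (i+1) - u • e m i ∈ N m := by
  rw [← gen_eq]
  exact Submodule.subset_span ⟨i, rfl⟩

lemma e_sub_mem (j : ℕ) : e m ((j : Fin m)) - u ^ j • e m 0 ∈ N m := by
  induction j with
  | zero => simp
  | succ j ih =>
      have h1 := step_mem m (j : Fin m)
      have h2 := Submodule.smul_mem (N m) u ih
      have h3 := add_mem h1 h2
      have key : e m ((j : Fin m)+1) - u • e m (j : Fin m)
          + u • (e m ((j : Fin m)) - u ^ j • e m 0)
          = e m (((j+1 : ℕ) : Fin m)) - u ^ (j+1) • e m 0 := by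
        push_cast
        rw [pow_succ]
        module
      rwa [key] at h3

def I : Ideal Rr := Ideal.span {(1 : Rr) - u ^ m}

def ψ : (Fin m → Rr) →ₗ[Rr] Rr ⧸ I m := (I m).mkQ ∘ₗ φ m

lemma ψ_surj : Function.Surjective (ψ m) := by
  intro x
  obtain ⟨r, rfl⟩ := Submodule.mkQ_surjective (I m) x
  refine ⟨r • e m 0, ?_⟩
  rw [ψ, LinearMap.comp_apply, map_smul, φ_e, Fin.val_zero, pow_zero, smul_eq_mul, mul_one]

lemma ker_ψ : LinearMap.ker (ψ m) = N m := by
  apply le_antisymm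
  · intro v hv
    rw [LinearMap.mem_ker, ψ, LinearMap.comp_apply, Submodule.mkQ_apply,
      Submodule.Quotient.mk_eq_zero] at hv
    rw [I, Ideal.mem_span_singleton] at hv
    obtain ⟨c, hc⟩ := hv
    have hv2 : v = ∑ i : Fin m, v i • e m i := by
      ext j
      simp [e, Finset.sum_apply, Pi.single_apply]
    have mem1 : v - (φ m v) • e m 0 ∈ N m := by
      have h1 : ∀ i : Fin m, v i • (e m (((i : ℕ) : Fin m)) - u ^ (i : ℕ) • e m 0)
          = v i • e m i - (u ^ (i : ℕ) * v i) • e m 0 := by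
        intro i
        rw [smul_sub, Fin.cast_val_eq_self, smul_smul, mul_comm]
      have heq : (∑ i : Fin m, v i • (e m (((i : ℕ) : Fin m)) - u ^ (i : ℕ) • e m 0))
          = v - (φ m v) • e m 0 := by
        calc (∑ i : Fin m, v i • (e m (((i : ℕ) : Fin m)) - u ^ (i : ℕ) • e m 0))
            = ∑ i : Fin m, (v i • e m i - (u ^ (i : ℕ) * v i) • e m 0) :=
              Finset.sum_congr rfl fun i _ => h1 i
          _ = (∑ i : Fin m, v i • e m i) - ∑ i : Fin m, (u ^ (i : ℕ) * v i) • e m 0 :=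
              Finset.sum_sub_distrib _ _
          _ = v - (φ m v) • e m 0 := by rw [← hv2, ← Finset.sum_smul, φ_apply]
      rw [← heq]
      exact Submodule.sum_mem _ fun i _ => Submodule.smul_mem _ _ (e_sub_mem m (i : ℕ))
    have mem2 : (φ m v) • e m 0 ∈ N m := by
      have h0 : ((1:Rr) - u ^ m) • e m 0 ∈ N m := by
        have h := e_sub_mem m m
        rw [Fin.natCast_self] at h
        rwa [sub_smul, one_smul]
      have h2 : (φ m v) • e m 0 = c • (((1:Rr) - u ^ m) • e m 0) := by
        rw [hc, smul_smul, mul_comm]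
      rw [h2]
      exact Submodule.smul_mem _ _ h0
    have h3 := add_mem mem1 mem2
    rwa [sub_add_cancel] at h3
  · rw [N, Submodule.span_le]
    rintro _ ⟨i, rfl⟩
    beta_reduce
    rw [SetLike.mem_coe, LinearMap.mem_ker, ψ, LinearMap.comp_apply]
    have hg : (T (-1) - 1 : Rr) • (Pi.single i (1:Rr) : Fin m → Rr) + Pi.single (i+1) (1:Rr)
        = e m (i+1) - u • e m i := gen_eq m i
    rw [hg, map_sub, map_smul, φ_e, φ_e, Submodule.mkQ_apply, Submodule.Quotient.mk_eq_zero]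
    by_cases h : (i : ℕ) + 1 < m
    · have h2 : ((i+1 : Fin m) : ℕ) = (i : ℕ) + 1 := by
        rw [Fin.val_add, Fin.val_one', Nat.mod_eq_of_lt (show 1 < m by omega),
          Nat.mod_eq_of_lt h]
      have h3 : u ^ ((i+1 : Fin m) : ℕ) - u • u ^ (i : ℕ) = 0 := by
        rw [h2, smul_eq_mul, pow_succ]; ring
      rw [h3]; exact zero_mem _
    · have hm1 : (i : ℕ) + 1 = m := by have := i.isLt; omega
      have h1 : (i + 1 : Fin m) = 0 := by
        apply Fin.ext
        rw [Fin.val_add, Fin.val_one', Fin.val_zero]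
        rcases Nat.lt_or_ge 1 m with hm | hm
        · have e1 : 1 % m = 1 := Nat.mod_eq_of_lt hm
          rw [e1, hm1, Nat.mod_self]
        · have hm0 : m = 1 := by have := i.isLt; omega
          subst hm0
          have := i.isLt
          omega
      have hpow : u ^ m = u ^ (i : ℕ) * u := by rw [← pow_succ, hm1]
      have h3 : u ^ ((i+1 : Fin m) : ℕ) - u • u ^ (i : ℕ) = 1 - u ^ m := by
        rw [h1, hpow, smul_eq_mul]
        simp [mul_comm]
      rw [h3]
      exact Ideal.subset_span rfl

end WheelAux

end WheelAux

/-- For `n > 0` and `R = ℤ[t,t⁻¹]`, the quotient of `Fin (2n) → R` by the submodule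
spanned by the vectors `(t⁻¹ - 1) • e_i + e_{i+1}` (indices cyclic in `Fin (2n)`)
is isomorphic as an `R`-module to `R ⧸ (1 - (1 - t⁻¹)^(2n))`. -/
theorem wheel_meridians_beta_module (n : ℕ) (hn : 0 < n) :
    haveI : NeZero (2 * n) := ⟨by omega⟩
    Nonempty
      (((Fin (2 * n) → LaurentPolynomial ℤ) ⧸ Submodule.span (LaurentPolynomial ℤ)
          (Set.range fun i : Fin (2 * n) =>
            (T (-1) - 1 : LaurentPolynomial ℤ) •
                (Pi.single i (1 : LaurentPolynomial ℤ) : Fin (2 * n) → LaurentPolynomial ℤ) +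
              Pi.single (i + 1) (1 : LaurentPolynomial ℤ))) ≃ₗ[LaurentPolynomial ℤ]
        (LaurentPolynomial ℤ ⧸
          Ideal.span {(1 : LaurentPolynomial ℤ) - (1 - T (-1)) ^ (2 * n)})) := by
  haveI : NeZero (2 * n) := ⟨by omega⟩
  exact ⟨(Submodule.quotEquivOfEq _ _ (WheelAux.ker_ψ (2 * n)).symm).trans
    ((WheelAux.ψ (2 * n)).quotKerEquivOfSurjective (WheelAux.ψ_surj (2 * n)))⟩
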